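/- (Converse direction, algebraic core.) Let f_1, …, f_k : X → ℝ^p, points x_1, …, x_m ∈ X, weights p_r > 0 with ∑ p_r = 1, and scalars ε_{ℓ r} with ∑_ℓ ε_{ℓ r}² = 1 for each r. Suppose c = ∑_r p_r ∑_ℓ ε_{ℓ r} f_ℓ(x_r) and there exists d ∈ ℝ^p with c^T d = 1 and |d^T ∑_ℓ ε_ℓ f_ℓ(x)| ≤ 1 for all x ∈ X and all unit vectors (ε_1,…,ε_k). Then: (a) ∑_ℓ (d^T f_ℓ(x))² ≤ 1 for all x ∈ X; (b) d^T ∑_ℓ ε_{ℓ r} f_ℓ(x_r) = 1 for each r; (c) ε_{ℓ r} = d^T f_ℓ(x_r) for all ℓ, r; and (d) c = M d where M = ∑_r p_r ∑_ℓ f_ℓ(x_r) f_ℓ(x_r)^T. -/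
import Mathlib


open Matrix Finset

lemma sum_mulVec' {ι n q : Type*} [Fintype n] (s : Finset ι)
    (M : ι → Matrix q n ℝ) (d : n → ℝ) :
    (∑ i ∈ s, M i) *ᵥ d = ∑ i ∈ s, M i *ᵥ d := by
  funext j
  simp only [mulVec, dotProduct, Matrix.sum_apply, Finset.sum_apply, Finset.sum_mul]
  rw [Finset.sum_comm]

lemma vecMulVec_mulVec' {n q : Type*} [Fintype n] (u : q → ℝ) (v d : n → ℝ) :
    vecMulVec u v *ᵥ d = (v ⬝ᵥ d) • u := by
  funext i
  simp only [mulVec, dotProduct, vecMulVec_apply, Pi.smul_apply, smul_eq_mul,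
    Finset.sum_mul]
  exact Finset.sum_congr rfl fun j _ => by ring

lemma dot_sum' {ι n : Type*} [Fintype n] (d : n → ℝ) (s : Finset ι)
    (v : ι → n → ℝ) : d ⬝ᵥ (∑ i ∈ s, v i) = ∑ i ∈ s, d ⬝ᵥ v i := by
  simp only [dotProduct, Finset.sum_apply, Finset.mul_sum]
  rw [Finset.sum_comm]

theorem elfving_converse_direction
    {X : Type*} [Nonempty X] {p k m : ℕ}
    (f : Fin k → X → Fin p → ℝ) (x : Fin m → X) (w : Fin m → ℝ)
    (hw : ∀ r, 0 < w r) (hw1 : ∑ r, w r = 1)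
    (ε : Fin m → Fin k → ℝ) (hε : ∀ r, ∑ ℓ, ε r ℓ ^ 2 = 1)
    (c : Fin p → ℝ)
    (hc : c = ∑ r, w r • (∑ ℓ, ε r ℓ • f ℓ (x r)))
    (d : Fin p → ℝ) (hcd : c ⬝ᵥ d = 1)
    (hsup : ∀ (y : X) (e : Fin k → ℝ), (∑ ℓ, e ℓ ^ 2 = 1) →
      |d ⬝ᵥ (∑ ℓ, e ℓ • f ℓ y)| ≤ 1) :
    (∀ y : X, ∑ ℓ, (d ⬝ᵥ f ℓ y) ^ 2 ≤ 1) ∧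
    (∀ r, d ⬝ᵥ (∑ ℓ, ε r ℓ • f ℓ (x r)) = 1) ∧
    (∀ r ℓ, ε r ℓ = d ⬝ᵥ f ℓ (x r)) ∧
    c = (∑ r, w r • (∑ ℓ, vecMulVec (f ℓ (x r)) (f ℓ (x r)))) *ᵥ d := by
  have hdot : ∀ (y : X) (e : Fin k → ℝ),
      d ⬝ᵥ (∑ ℓ, e ℓ • f ℓ y) = ∑ ℓ, e ℓ * (d ⬝ᵥ f ℓ y) := by
    intro y e
    rw [dot_sum']
    exact Finset.sum_congr rfl fun ℓ _ => by
      rw [dotProduct_smul, smul_eq_mul]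
  -- part (a)
  have parta : ∀ y : X, ∑ ℓ, (d ⬝ᵥ f ℓ y) ^ 2 ≤ 1 := by
    intro y
    set g : Fin k → ℝ := fun ℓ => d ⬝ᵥ f ℓ y with hg
    have hnn : (0:ℝ) ≤ ∑ ℓ, g ℓ ^ 2 := Finset.sum_nonneg fun ℓ _ => sq_nonneg _
    rcases eq_or_lt_of_le hnn with h0 | hpos
    · linarith
    · set S : ℝ := Real.sqrt (∑ ℓ, g ℓ ^ 2) with hS
      have hSpos : 0 < S := Real.sqrt_pos.mpr hpos
      have hS2 : S ^ 2 = ∑ ℓ, g ℓ ^ 2 := Real.sq_sqrt hnn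
      have hunit : ∑ ℓ, (g ℓ / S) ^ 2 = 1 := by
        simp only [div_pow]
        rw [← Finset.sum_div, ← hS2, div_self (by positivity)]
      have hb := hsup y (fun ℓ => g ℓ / S) hunit
      rw [hdot] at hb
      have heq : ∑ ℓ, g ℓ / S * g ℓ = S := by
        have h2 : ∑ ℓ, g ℓ / S * g ℓ = (∑ ℓ, g ℓ ^ 2) / S := by
          rw [Finset.sum_div]
          exact Finset.sum_congr rfl fun ℓ _ => by ring
        rw [h2, ← hS2, sq]
        field_simp
      rw [heq, abs_of_pos hSpos] at hb
      calc ∑ ℓ, g ℓ ^ 2 = S ^ 2 := hS2.symm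
        _ ≤ 1 := by nlinarith
  -- part (b)
  have hle : ∀ r, d ⬝ᵥ (∑ ℓ, ε r ℓ • f ℓ (x r)) ≤ 1 := fun r =>
    (abs_le.mp (hsup (x r) (ε r) (hε r))).2
  have hsum : ∑ r, w r * (d ⬝ᵥ (∑ ℓ, ε r ℓ • f ℓ (x r))) = 1 := by
    rw [← hcd, hc, dotProduct_comm, dot_sum']
    exact Finset.sum_congr rfl fun r _ => by
      rw [dotProduct_smul, smul_eq_mul]
  have partb : ∀ r, d ⬝ᵥ (∑ ℓ, ε r ℓ • f ℓ (x r)) = 1 := by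
    by_contra hcon
    push_neg at hcon
    obtain ⟨r0, hr0⟩ := hcon
    have hlt : w r0 * (d ⬝ᵥ (∑ ℓ, ε r0 ℓ • f ℓ (x r0))) < w r0 * 1 :=
      mul_lt_mul_of_pos_left (lt_of_le_of_ne (hle r0) hr0) (hw r0)
    have hstrict : ∑ r, w r * (d ⬝ᵥ (∑ ℓ, ε r ℓ • f ℓ (x r))) < ∑ r, w r * 1 :=
      Finset.sum_lt_sum (fun r _ => mul_le_mul_of_nonneg_left (hle r) (hw r).le)
        ⟨r0, Finset.mem_univ _, hlt⟩
    simp only [mul_one, hw1] at hstrict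
    linarith [hsum]
  -- part (c)
  have partc : ∀ r ℓ, ε r ℓ = d ⬝ᵥ f ℓ (x r) := by
    intro r
    have h1 := partb r
    rw [hdot] at h1
    have hsq : ∑ ℓ, (ε r ℓ - d ⬝ᵥ f ℓ (x r)) ^ 2 ≤ 0 := by
      have expand : ∑ ℓ, (ε r ℓ - d ⬝ᵥ f ℓ (x r)) ^ 2
          = (∑ ℓ, ε r ℓ ^ 2) - 2 * (∑ ℓ, ε r ℓ * (d ⬝ᵥ f ℓ (x r)))
            + ∑ ℓ, (d ⬝ᵥ f ℓ (x r)) ^ 2 := by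
        simp only [Finset.mul_sum, ← Finset.sum_sub_distrib, ← Finset.sum_add_distrib]
        exact Finset.sum_congr rfl fun ℓ _ => by ring
      rw [expand, hε r, h1]
      linarith [parta (x r)]
    intro ℓ
    have hz := (Finset.sum_eq_zero_iff_of_nonneg (fun ℓ _ => sq_nonneg _)).mp
      (le_antisymm hsq (Finset.sum_nonneg fun ℓ _ => sq_nonneg _)) ℓ (Finset.mem_univ _)
    have := sq_eq_zero_iff.mp hz
    linarith
  refine ⟨parta, partb, partc, ?_⟩
  -- part (d)
  have hterm : ∀ r, (w r • (∑ ℓ, vecMulVec (f ℓ (x r)) (f ℓ (x r)))) *ᵥ d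
      = w r • (∑ ℓ, ε r ℓ • f ℓ (x r)) := by
    intro r
    rw [smul_mulVec, sum_mulVec']
    congr 1
    refine Finset.sum_congr rfl fun ℓ _ => ?_
    rw [vecMulVec_mulVec', partc r ℓ, dotProduct_comm]
  rw [hc, sum_mulVec']
  exact Finset.sum_congr rfl fun r _ => (hterm r).symm
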